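/- The base-3/2 representation of a natural number is unique up to leading zeros: if ds and ds' are two base-3/2 representations of the same natural number N, both with all digits at most 2, and neither list has a trailing zero entry (i.e., in big-endian notation neither has a leading zero digit), then ds = ds'. -/

import Mathlib

def IsBase32Rep (N : ℕ) (ds : List ℕ) : Prop :=
  (∀ d ∈ ds, d ≤ 2) ∧
    (N : ℚ) = ∑ i ∈ Finset.range ds.length, (ds.getD i 0 : ℚ) * (3 / 2 : ℚ) ^ i

def b32val (ds : List ℕ) : ℚ :=
  ∑ i ∈ Finset.range ds.length, (ds.getD i 0 : ℚ) * (3 / 2 : ℚ) ^ i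

lemma b32val_cons (d : ℕ) (t : List ℕ) :
    b32val (d :: t) = d + (3/2) * b32val t := by
  unfold b32val
  rw [List.length_cons, Finset.sum_range_succ']
  simp only [List.getD_cons_succ, List.getD_cons_zero, pow_zero, mul_one]
  rw [Finset.mul_sum, add_comm]
  congr 1
  refine Finset.sum_congr rfl fun i _ => ?_
  ring

lemma b32val_pos (ds : List ℕ) (hne : ds ≠ []) (hz : ds.getLast? ≠ some 0) :
    0 < b32val ds := by
  have hlast : ds.getLast hne ≠ 0 := by
    intro h0
    exact hz (by rw [List.getLast?_eq_getLast hne, h0])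
  have hlen : 0 < ds.length := List.length_pos_iff.mpr hne
  apply Finset.sum_pos'
  · intro i _
    positivity
  · refine ⟨ds.length - 1, Finset.mem_range.mpr (by omega), ?_⟩
    have : ds.getD (ds.length - 1) 0 = ds.getLast hne := by
      rw [List.getLast_eq_getElem, List.getD_eq_getElem ds 0 (by omega)]
    rw [this]
    have : (0:ℚ) < (ds.getLast hne : ℚ) := by
      exact_mod_cast Nat.pos_of_ne_zero hlast
    positivity

lemma b32val_int (ds : List ℕ) (m : ℕ) (hm : ds.length ≤ m) :
    ∃ A : ℤ, (A : ℚ) = 2 ^ m * b32val ds := by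
  refine ⟨∑ i ∈ Finset.range ds.length, (ds.getD i 0 : ℤ) * 3 ^ i * 2 ^ (m - i), ?_⟩
  unfold b32val
  rw [Finset.mul_sum]
  push_cast
  refine Finset.sum_congr rfl fun i hi => ?_
  have hi' : i < ds.length := Finset.mem_range.mp hi
  have h2 : (2:ℚ) ^ m = 2 ^ (m - i) * 2 ^ i := by
    rw [← pow_add]; congr 1; omega
  rw [h2, div_pow]
  have : (2:ℚ) ^ i ≠ 0 := by positivity
  field_simp

lemma tail_last {d : ℕ} {t : List ℕ} (h : (d :: t).getLast? ≠ some 0) :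
    t.getLast? ≠ some 0 := by
  cases t with
  | nil => simp
  | cons a s => rwa [List.getLast?_cons_cons] at h

lemma b32_key : ∀ ds ds' : List ℕ, (∀ d ∈ ds, d ≤ 2) → (∀ d ∈ ds', d ≤ 2) →
    b32val ds = b32val ds' → ds.getLast? ≠ some 0 → ds'.getLast? ≠ some 0 →
    ds = ds' := by
  intro ds
  induction ds with
  | nil =>
    intro ds' _ hd' hv _ hz'
    cases ds' with
    | nil => rfl
    | cons d' t' =>
      exfalso
      have := b32val_pos (d' :: t') (by simp) hz'
      rw [← hv] at this
      simp [b32val] at this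
  | cons d t ih =>
    intro ds' hd hd' hv hz hz'
    cases ds' with
    | nil =>
      exfalso
      have := b32val_pos (d :: t) (by simp) hz
      rw [hv] at this
      simp [b32val] at this
    | cons d' t' =>
      rw [b32val_cons, b32val_cons] at hv
      set m := max t.length t'.length with hm
      obtain ⟨A, hA⟩ := b32val_int t m (le_max_left _ _)
      obtain ⟨B, hB⟩ := b32val_int t' m (le_max_right _ _)
      have key : (2:ℚ) ^ (m+1) * d + 3 * A = 2 ^ (m+1) * d' + 3 * B := by
        rw [hA, hB]
        have := congrArg (fun x => (2:ℚ)^(m+1) * x) hv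
        rw [mul_add, mul_add] at this
        calc (2:ℚ) ^ (m+1) * d + 3 * (2 ^ m * b32val t)
            = 2 ^ (m+1) * (d:ℚ) + 2 ^ (m+1) * (3/2 * b32val t) := by ring
          _ = 2 ^ (m+1) * (d':ℚ) + 2 ^ (m+1) * (3/2 * b32val t') := this
          _ = _ := by ring
      have keyZ : (2:ℤ) ^ (m+1) * d + 3 * A = 2 ^ (m+1) * d' + 3 * B := by
        exact_mod_cast key
      have hdvd : (3:ℤ) ∣ 2 ^ (m+1) * ((d:ℤ) - d') := by
        refine ⟨B - A, ?_⟩  -- wrong direction? 2^(m+1)*(d-d') = 3*(B-A)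
        linarith [keyZ]
      have hdvd' : (3:ℤ) ∣ ((d:ℤ) - d') := by
        have hp : Prime (3:ℤ) := Int.prime_three
        rcases hp.dvd_mul.mp hdvd with h1 | h1
        · exfalso
          have := hp.dvd_of_dvd_pow h1
          norm_num at this
        · exact h1
      have hdle : d ≤ 2 := hd d (by simp)
      have hdle' : d' ≤ 2 := hd' d' (by simp)
      have hdd : d = d' := by omega
      subst hdd
      have hvt : b32val t = b32val t' := by
        have : (3/2:ℚ) * b32val t = 3/2 * b32val t' := by linarith
        exact mul_left_cancel₀ (by norm_num) this
      have := ih t' (fun x hx => hd x (by simp [hx])) (fun x hx => hd' x (by simp [hx]))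
        hvt (tail_last hz) (tail_last hz')
      rw [this]

theorem base32_rep_unique (N : ℕ) (ds ds' : List ℕ)
    (h : IsBase32Rep N ds) (h' : IsBase32Rep N ds')
    (hz : ds.getLast? ≠ some 0) (hz' : ds'.getLast? ≠ some 0) :
    ds = ds' := by
  exact b32_key ds ds' h.1 h'.1 (h.2.symm.trans h'.2) hz hz'
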